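/- If ζ ∈ ℝ₊^{M×M} satisfies ζ·π ≤ 1 for every M×M permutation matrix π, then ζ ≤ Σ_î x_î r_î + Σ_ĵ y_ĵ c_ĵ componentwise for some nonnegative reals x_î, y_ĵ with Σ_î x_î + Σ_ĵ y_ĵ ≤ 1. -/

import Mathlib

set_option maxHeartbeats 1000000
set_option synthInstance.maxHeartbeats 400000


open Finset Pointwise

noncomputable def covA (M : ℕ) :
    ((Fin M → ℝ) × (Fin M → ℝ)) →ₗ[ℝ] (Fin M → Fin M → ℝ) where
  toFun p := fun i j => p.1 i + p.2 j
  map_add' p q := by funext i j; simp; ring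
  map_smul' c p := by funext i j; simp [smul_eq_mul]; ring

def covK (M : ℕ) : Set ((Fin M → ℝ) × (Fin M → ℝ)) :=
  {p | (∀ i, 0 ≤ p.1 i) ∧ (∀ j, 0 ≤ p.2 j) ∧ (∑ i, p.1 i) + (∑ j, p.2 j) ≤ 1}

lemma covK_convex (M : ℕ) : Convex ℝ (covK M) := by
  rintro p hp q hq a b ha hb hab
  refine ⟨fun i => ?_, fun j => ?_, ?_⟩
  · exact add_nonneg (mul_nonneg ha (hp.1 i)) (mul_nonneg hb (hq.1 i))
  · exact add_nonneg (mul_nonneg ha (hp.2.1 j)) (mul_nonneg hb (hq.2.1 j))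
  · have h1 := hp.2.2
    have h2 := hq.2.2
    simp only [Prod.fst_add, Prod.snd_add, Prod.smul_fst, Prod.smul_snd, Pi.add_apply,
      Pi.smul_apply, smul_eq_mul, Finset.sum_add_distrib, ← Finset.mul_sum]
    nlinarith

lemma covK_isClosed (M : ℕ) : IsClosed (covK M) := by
  have h1 : IsClosed {p : (Fin M → ℝ) × (Fin M → ℝ) | ∀ i, 0 ≤ p.1 i} := by
    have : {p : (Fin M → ℝ) × (Fin M → ℝ) | ∀ i, 0 ≤ p.1 i}
        = ⋂ i, {p | 0 ≤ p.1 i} := by ext p; simp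
    rw [this]
    exact isClosed_iInter fun i =>
      isClosed_le continuous_const ((continuous_apply i).comp continuous_fst)
  have h2 : IsClosed {p : (Fin M → ℝ) × (Fin M → ℝ) | ∀ j, 0 ≤ p.2 j} := by
    have : {p : (Fin M → ℝ) × (Fin M → ℝ) | ∀ j, 0 ≤ p.2 j}
        = ⋂ j, {p | 0 ≤ p.2 j} := by ext p; simp
    rw [this]
    exact isClosed_iInter fun j =>
      isClosed_le continuous_const ((continuous_apply j).comp continuous_snd)
  have h3 : IsClosed {p : (Fin M → ℝ) × (Fin M → ℝ) |
      (∑ i, p.1 i) + (∑ j, p.2 j) ≤ 1} := by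
    apply isClosed_le _ continuous_const
    apply Continuous.add
    · exact continuous_finset_sum _ fun i _ => (continuous_apply i).comp continuous_fst
    · exact continuous_finset_sum _ fun j _ => (continuous_apply j).comp continuous_snd
  have : covK M = ({p : (Fin M → ℝ) × (Fin M → ℝ) | ∀ i, 0 ≤ p.1 i}
      ∩ ({p | ∀ j, 0 ≤ p.2 j} ∩ {p | (∑ i, p.1 i) + (∑ j, p.2 j) ≤ 1})) := by
    rfl
  rw [this]
  exact h1.inter (h2.inter h3)

lemma covK_isCompact (M : ℕ) : IsCompact (covK M) := by
  have hsub : covK M ⊆ (Set.Icc (0 : Fin M → ℝ) 1) ×ˢ (Set.Icc (0 : Fin M → ℝ) 1) := by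
    rintro p ⟨h1, h2, h3⟩
    have hx1 : ∀ i, p.1 i ≤ 1 := by
      intro i
      have := Finset.single_le_sum (f := p.1) (fun i _ => h1 i) (Finset.mem_univ i)
      have hy : 0 ≤ ∑ j, p.2 j := Finset.sum_nonneg fun j _ => h2 j
      linarith
    have hy1 : ∀ j, p.2 j ≤ 1 := by
      intro j
      have := Finset.single_le_sum (f := p.2) (fun j _ => h2 j) (Finset.mem_univ j)
      have hx : 0 ≤ ∑ i, p.1 i := Finset.sum_nonneg fun i _ => h1 i
      linarith
    exact ⟨⟨fun i => h1 i, fun i => hx1 i⟩, ⟨fun j => h2 j, fun j => hy1 j⟩⟩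
  exact ((isCompact_Icc).prod (isCompact_Icc)).of_isClosed_subset (covK_isClosed M) hsub

def elemMat (M : ℕ) (i j : Fin M) : Fin M → Fin M → ℝ :=
  Pi.single i (Pi.single j 1)

lemma elemMat_apply (M : ℕ) (i j i' j' : Fin M) :
    elemMat M i j i' j' = if i' = i then (if j' = j then (1 : ℝ) else 0) else 0 := by
  simp only [elemMat, Pi.single_apply]
  split_ifs <;> simp [Pi.single_apply] <;> tauto

noncomputable def covL (M : ℕ) (ζ : Fin M → Fin M → ℝ) :
    Matrix (Fin M) (Fin M) ℝ →ₗ[ℝ] ℝ where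
  toFun m := ∑ i, ∑ j, ζ i j * m i j
  map_add' m n := by
    simp [Matrix.add_apply, mul_add, Finset.sum_add_distrib]
  map_smul' c m := by
    simp only [Matrix.smul_apply, smul_eq_mul, RingHom.id_apply, Finset.mul_sum]
    congr 1; ext i; congr 1; ext j; ring

theorem stmt_6 (M : ℕ) (ζ : Fin M → Fin M → ℝ) (hζ : ∀ i j, 0 ≤ ζ i j)
    (hfeas : ∀ σ : Equiv.Perm (Fin M), ∑ i, ζ i (σ i) ≤ 1) :
    ∃ x y : Fin M → ℝ, (∀ i, 0 ≤ x i) ∧ (∀ j, 0 ≤ y j) ∧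
      (∑ i, x i) + (∑ j, y j) ≤ 1 ∧
      ∀ i j, ζ i j ≤ x i + y j := by
  by_cases hM0 : M = 0
  · subst hM0
    exact ⟨0, 0, fun i => le_refl 0, fun j => le_refl 0, by simp, fun i => i.elim0⟩
  have hMpos : 0 < M := Nat.pos_of_ne_zero hM0
  set N : Set (Fin M → Fin M → ℝ) := {m | ∀ i j, m i j ≤ 0} with hNdef
  set D : Set (Fin M → Fin M → ℝ) := (⇑(covA M) '' covK M) + N with hDdef
  have hNconv : Convex ℝ N := by
    rintro m hm n hn a b ha hb hab i j
    exact add_nonpos (mul_nonpos_of_nonneg_of_nonpos ha (hm i j))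
      (mul_nonpos_of_nonneg_of_nonpos hb (hn i j))
  have hNclosed : IsClosed N := by
    have : N = ⋂ i, ⋂ j, {m : Fin M → Fin M → ℝ | m i j ≤ 0} := by
      ext m; simp [hNdef]
    rw [this]
    exact isClosed_iInter fun i => isClosed_iInter fun j =>
      isClosed_le ((continuous_apply j).comp (continuous_apply i)) continuous_const
  have hDconv : Convex ℝ D := by
    exact Convex.add ((covK_convex M).linear_image (covA M)) hNconv
  have hDclosed : IsClosed D := by
    exact hNclosed.add_left_of_isCompact
      ((covK_isCompact M).image (covA M).continuous_of_finiteDimensional)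
  have hmem : ζ ∈ D := by
    by_contra hnot
    obtain ⟨f, u, hfu, hζu⟩ := geometric_hahn_banach_closed_point hDconv hDclosed hnot
    set g : Fin M → Fin M → ℝ := fun i j => f (elemMat M i j) with hgdef
    have hrep : ∀ m : Fin M → Fin M → ℝ, f m = ∑ i, ∑ j, m i j * g i j := by
      intro m
      have hm : m = ∑ i, ∑ j, m i j • elemMat M i j := by
        funext i' j'
        simp only [Finset.sum_apply, Pi.smul_apply, elemMat_apply, smul_eq_mul,
          mul_ite, mul_one, mul_zero]
        rw [Finset.sum_eq_single i']
        · rw [Finset.sum_eq_single j']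
          · simp
          · intro b _ hb
            rw [if_pos rfl, if_neg (Ne.symm hb)]
          · intro h; exact absurd (Finset.mem_univ j') h
        · intro b _ hb
          apply Finset.sum_eq_zero
          intro c _
          rw [if_neg (Ne.symm hb)]
        · intro h; exact absurd (Finset.mem_univ i') h
      conv_lhs => rw [hm]
      rw [map_sum]
      simp [map_sum, map_smul, smul_eq_mul]
      rfl
    have hzeroK : ((0 : Fin M → ℝ), (0 : Fin M → ℝ)) ∈ covK M := by
      refine ⟨fun i => le_refl 0, fun j => le_refl 0, by simp⟩
    have hA0 : covA M (0, 0) = 0 := map_zero _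
    have hmemN : ∀ (t : ℝ) (i j : Fin M), 0 ≤ t →
        (-t • elemMat M i j : Fin M → Fin M → ℝ) ∈ N := by
      intro t i j ht i' j'
      simp only [Pi.smul_apply, smul_eq_mul, elemMat_apply]
      split_ifs <;> simp <;> linarith
    have hDmem : ∀ (t : ℝ) (i j : Fin M), 0 ≤ t →
        (-t • elemMat M i j : Fin M → Fin M → ℝ) ∈ D := by
      intro t i j ht
      have := Set.add_mem_add (Set.mem_image_of_mem (covA M) hzeroK) (hmemN t i j ht)
      simpa [hA0] using this
    have hu0 : 0 < u := by
      have := hfu _ (hDmem 0 ⟨0, hMpos⟩ ⟨0, hMpos⟩ le_rfl)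
      simpa using this
    have hgnn : ∀ i j, 0 ≤ g i j := by
      intro i j
      by_contra hneg
      push_neg at hneg
      have ht : 0 ≤ (u + 1) / (-g i j) := div_nonneg (by linarith) (by linarith)
      have h1 := hfu _ (hDmem _ i j ht)
      rw [map_smul, smul_eq_mul] at h1
      have hft : f (elemMat M i j) = g i j := rfl
      rw [hft] at h1
      have hgne : g i j ≠ 0 := ne_of_lt hneg
      have h2 : -((u + 1) / (-g i j)) * g i j = u + 1 := by
        rw [div_neg, neg_neg, div_mul_cancel₀ _ hgne]
      linarith
    have hrow : ∀ i, ∑ j, g i j < u := by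
      intro i
      have hK : ((Pi.single i (1 : ℝ) : Fin M → ℝ), (0 : Fin M → ℝ)) ∈ covK M := by
        refine ⟨fun i' => ?_, fun j => le_refl 0, ?_⟩
        · simp only [Pi.single_apply]; split_ifs <;> norm_num
        · simp [Pi.single_apply]
      have h0N : (0 : Fin M → Fin M → ℝ) ∈ N := fun i j => le_refl 0
      have hD' : covA M (Pi.single i (1 : ℝ), 0) ∈ D := by
        have := Set.add_mem_add (Set.mem_image_of_mem (covA M) hK) h0N
        simpa using this
      have := hfu _ hD'
      rw [hrep] at this
      have heq : ∑ i', ∑ j, (covA M (Pi.single i (1 : ℝ), 0)) i' j * g i' j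
          = ∑ j, g i j := by
        simp only [covA, LinearMap.coe_mk, AddHom.coe_mk, Pi.zero_apply, add_zero,
          Pi.single_apply]
        rw [Finset.sum_eq_single i]
        · simp
        · intro i' _ hi'
          simp [if_neg (by exact fun h => hi' h)]
        · simp
      rw [heq] at this
      exact this
    have hcol : ∀ j, ∑ i, g i j < u := by
      intro j
      have hK : ((0 : Fin M → ℝ), (Pi.single j (1 : ℝ) : Fin M → ℝ)) ∈ covK M := by
        refine ⟨fun i => le_refl 0, fun j' => ?_, ?_⟩
        · simp only [Pi.single_apply]; split_ifs <;> norm_num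
        · simp [Pi.single_apply]
      have h0N : (0 : Fin M → Fin M → ℝ) ∈ N := fun i j => le_refl 0
      have hD' : covA M (0, Pi.single j (1 : ℝ)) ∈ D := by
        have := Set.add_mem_add (Set.mem_image_of_mem (covA M) hK) h0N
        simpa using this
      have := hfu _ hD'
      rw [hrep] at this
      have heq : ∑ i, ∑ j', (covA M (0, Pi.single j (1 : ℝ))) i j' * g i j'
          = ∑ i, g i j := by
        refine Finset.sum_congr rfl fun i _ => ?_
        simp only [covA, LinearMap.coe_mk, AddHom.coe_mk, Pi.zero_apply, zero_add,
          Pi.single_apply]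
        rw [Finset.sum_eq_single j]
        · simp
        · intro j' _ hj'
          simp [if_neg (by exact fun h => hj' h)]
        · simp
      rw [heq] at this
      exact this
    have hζg : u < ∑ i, ∑ j, ζ i j * g i j := by rw [← hrep]; exact hζu
    -- normalize
    set π : Fin M → Fin M → ℝ := fun i j => g i j / u with hπdef
    have hπnn : ∀ i j, 0 ≤ π i j := fun i j => div_nonneg (hgnn i j) hu0.le
    have hπrow : ∀ i, ∑ j, π i j < 1 := by
      intro i
      rw [hπdef]
      simp only
      rw [← Finset.sum_div]
      rw [div_lt_one hu0]
      exact hrow i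
    have hπcol : ∀ j, ∑ i, π i j < 1 := by
      intro j
      simp only [hπdef]
      rw [← Finset.sum_div, div_lt_one hu0]
      exact hcol j
    have hπζ : 1 < ∑ i, ∑ j, ζ i j * π i j := by
      have : ∑ i, ∑ j, ζ i j * π i j = (∑ i, ∑ j, ζ i j * g i j) / u := by
        rw [Finset.sum_div]
        refine Finset.sum_congr rfl fun i _ => ?_
        rw [Finset.sum_div]
        refine Finset.sum_congr rfl fun j _ => ?_
        rw [hπdef]; ring
      rw [this, lt_div_iff₀ hu0, one_mul]
      exact hζg
    -- padding
    set s : ℝ := ∑ i, ∑ j, π i j with hsdef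
    have hscol : s = ∑ j, ∑ i, π i j := Finset.sum_comm
    have hsM : s < M := by
      calc s = ∑ i : Fin M, ∑ j, π i j := rfl
        _ < ∑ i : Fin M, 1 :=
          Finset.sum_lt_sum_of_nonempty (Finset.univ_nonempty_iff.2 ⟨⟨0, hMpos⟩⟩)
            (fun i _ => hπrow i)
        _ = M := by simp
    have hden : 0 < (M : ℝ) - s := by linarith
    set P : Fin M → Fin M → ℝ := fun i j =>
      π i j + (1 - ∑ j', π i j') * (1 - ∑ i', π i' j) / ((M : ℝ) - s) with hPdef
    have hPnn : ∀ i j, 0 ≤ P i j := by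
      intro i j
      have h1 : 0 < 1 - ∑ j', π i j' := by linarith [hπrow i]
      have h2 : 0 < 1 - ∑ i', π i' j := by linarith [hπcol j]
      have := div_nonneg (mul_nonneg h1.le h2.le) hden.le
      have hπ := hπnn i j
      simp only [hPdef]
      linarith
    have hProw : ∀ i, ∑ j, P i j = 1 := by
      intro i
      simp only [hPdef]
      rw [Finset.sum_add_distrib]
      have : ∑ j, (1 - ∑ j', π i j') * (1 - ∑ i', π i' j) / ((M : ℝ) - s)
          = (1 - ∑ j', π i j') * (∑ j, (1 - ∑ i', π i' j)) / ((M : ℝ) - s) := by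
        rw [← Finset.sum_div, ← Finset.mul_sum]
      rw [this]
      have hsum : ∑ j, (1 - ∑ i', π i' j) = (M : ℝ) - s := by
        rw [Finset.sum_sub_distrib, ← hscol]
        simp
      rw [hsum, mul_div_assoc, div_self hden.ne', mul_one]
      ring
    have hPcol : ∀ j, ∑ i, P i j = 1 := by
      intro j
      simp only [hPdef]
      rw [Finset.sum_add_distrib]
      have : ∑ i, (1 - ∑ j', π i j') * (1 - ∑ i', π i' j) / ((M : ℝ) - s)
          = (∑ i, (1 - ∑ j', π i j')) * (1 - ∑ i', π i' j) / ((M : ℝ) - s) := by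
        rw [← Finset.sum_div, ← Finset.sum_mul]
      rw [this]
      have hsum : ∑ i, (1 - ∑ j', π i j') = (M : ℝ) - s := by
        rw [Finset.sum_sub_distrib, ← hsdef]
        simp
      rw [hsum, mul_comm, mul_div_assoc, div_self hden.ne', mul_one]
      ring
    have hPds : (Matrix.of P) ∈ doublyStochastic ℝ (Fin M) := by
      rw [mem_doublyStochastic_iff_sum]
      exact ⟨fun i j => hPnn i j, fun i => hProw i, fun j => hPcol j⟩
    -- Birkhoff
    have hPds2 : (Matrix.of P) ∈
        convexHull ℝ {x | ∃ σ : Equiv.Perm (Fin M), σ.permMatrix ℝ = x} := by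
      rw [← doublyStochastic_eq_convexHull_permMatrix]
      exact hPds
    have himg : (covL M ζ) (Matrix.of P) ∈
        convexHull ℝ ((covL M ζ) '' {x | ∃ σ : Equiv.Perm (Fin M), σ.permMatrix ℝ = x}) := by
      rw [← (covL M ζ).image_convexHull]
      exact Set.mem_image_of_mem _ hPds2
    have hsubset : (covL M ζ) '' {x | ∃ σ : Equiv.Perm (Fin M), σ.permMatrix ℝ = x}
        ⊆ Set.Iic 1 := by
      rintro r ⟨m, ⟨σ, rfl⟩, rfl⟩
      have : (covL M ζ) (σ.permMatrix ℝ) = ∑ i, ζ i (σ i) := by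
        simp only [covL, LinearMap.coe_mk, AddHom.coe_mk]
        refine Finset.sum_congr rfl fun i _ => ?_
        simp [Equiv.Perm.permMatrix, PEquiv.toMatrix_apply, Equiv.toPEquiv_apply,
          mul_ite, eq_comm]
      rw [this]
      exact hfeas σ
    have hle1 : (covL M ζ) (Matrix.of P) ≤ 1 := by
      have := convexHull_min hsubset (convex_Iic 1) himg
      exact this
    have hgt1 : 1 < (covL M ζ) (Matrix.of P) := by
      have hLP : (covL M ζ) (Matrix.of P) = ∑ i, ∑ j, ζ i j * P i j := rfl
      have hmono : ∑ i, ∑ j, ζ i j * π i j ≤ ∑ i, ∑ j, ζ i j * P i j := by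
        refine Finset.sum_le_sum fun i _ => Finset.sum_le_sum fun j _ => ?_
        apply mul_le_mul_of_nonneg_left _ (hζ i j)
        have h1 : 0 ≤ 1 - ∑ j', π i j' := by linarith [hπrow i]
        have h2 : 0 ≤ 1 - ∑ i', π i' j := by linarith [hπcol j]
        have := div_nonneg (mul_nonneg h1 h2) hden.le
        simp only [hPdef]
        linarith
      rw [hLP]
      linarith
    linarith
  obtain ⟨a, ⟨p, hpK, rfl⟩, n, hnN, hsum⟩ := hmem
  refine ⟨p.1, p.2, hpK.1, hpK.2.1, hpK.2.2, fun i j => ?_⟩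
  have : ζ i j = p.1 i + p.2 j + n i j := by
    rw [← hsum]; rfl
  have := hnN i j
  linarith [hnN i j, (by rw [← hsum]; rfl : ζ i j = p.1 i + p.2 j + n i j)]
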